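/- Let d ≥ 1 be an integer, let m : ℝ^d → ℝ be Lipschitz with constant L and satisfy 0 < c₀ ≤ m(x) ≤ C₀ for all x ∈ ℝ^d, let K : ℝ → ℝ be Lipschitz with constant L_K and with support contained in [−1,1], set K_d(u) := ∏_{j=1}^d K(u_j), and assume κ := ∫_{ℝ^d} K_d(u)² du > 0. For x ∈ ℝ^d and h > 0 define A(x,h) := ∫_{ℝ^d} m(x + h·u)·K_d(u)² du and the normalized kernel function Φ_{x,h}(t) := (h^d · A(x,h))^{−1/2} · K_d((t − x)/h), which satisfies ∫_{ℝ^d} Φ_{x,h}(t)²·m(t) dt = 1. Then there exists a constant C' (depending only on d, L, L_K, c₀, C₀, and K) such that for all x, x' ∈ ℝ^d and every h ∈ (0,1], ∫_{ℝ^d} (Φ_{x,h}(t) − Φ_{x',h}(t))² · m(t) dt ≤ C' · h^{−2} · ‖x − x'‖². -/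

import Mathlib

open MeasureTheory

lemma prod_diff_bound' {ι : Type*} [DecidableEq ι] (f g : ι → ℝ) (M : ℝ) (hM : 1 ≤ M)
    (hf : ∀ i, |f i| ≤ M) (hg : ∀ i, |g i| ≤ M) (s : Finset ι) :
    |∏ i ∈ s, f i - ∏ i ∈ s, g i| ≤ M ^ s.card * ∑ i ∈ s, |f i - g i| := by
  classical
  induction s using Finset.induction with
  | empty => simp
  | @insert a s ha ih =>
    rw [Finset.prod_insert ha, Finset.prod_insert ha, Finset.sum_insert ha,
      Finset.card_insert_of_notMem ha]
    have hPg : |∏ i ∈ s, g i| ≤ M ^ s.card := by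
      calc |∏ i ∈ s, g i| = ∏ i ∈ s, |g i| := Finset.abs_prod s g
        _ ≤ ∏ i ∈ s, M := Finset.prod_le_prod (fun i _ => abs_nonneg _) (fun i _ => hg i)
        _ = M ^ s.card := by rw [Finset.prod_const]
    have key : f a * ∏ i ∈ s, f i - g a * ∏ i ∈ s, g i
        = f a * (∏ i ∈ s, f i - ∏ i ∈ s, g i) + (f a - g a) * ∏ i ∈ s, g i := by ring
    rw [key]
    have h1 : |f a * (∏ i ∈ s, f i - ∏ i ∈ s, g i)| ≤ M * (M ^ s.card * ∑ i ∈ s, |f i - g i|) := by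
      rw [abs_mul]
      exact mul_le_mul (hf a) ih (abs_nonneg _) (le_trans zero_le_one hM)
    have h2 : |(f a - g a) * ∏ i ∈ s, g i| ≤ |f a - g a| * M ^ s.card := by
      rw [abs_mul]
      exact mul_le_mul_of_nonneg_left hPg (abs_nonneg _)
    have hMpos : (0:ℝ) < M := lt_of_lt_of_le zero_lt_one hM
    calc |f a * (∏ i ∈ s, f i - ∏ i ∈ s, g i) + (f a - g a) * ∏ i ∈ s, g i|
        ≤ |f a * (∏ i ∈ s, f i - ∏ i ∈ s, g i)| + |(f a - g a) * ∏ i ∈ s, g i| := abs_add_le _ _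
      _ ≤ M * (M ^ s.card * ∑ i ∈ s, |f i - g i|) + |f a - g a| * M ^ s.card :=
          add_le_add h1 h2
      _ ≤ M ^ (s.card + 1) * (|f a - g a| + ∑ i ∈ s, |f i - g i|) := by
          have hpow : M ^ s.card ≤ M ^ (s.card + 1) := by
            calc M ^ s.card = M ^ s.card * 1 := by ring
              _ ≤ M ^ s.card * M := by
                  exact mul_le_mul_of_nonneg_left hM (le_of_lt (pow_pos hMpos _))
              _ = M ^ (s.card + 1) := by ring
          calc M * (M ^ s.card * ∑ i ∈ s, |f i - g i|) + |f a - g a| * M ^ s.card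
              = M ^ (s.card+1) * ∑ i ∈ s, |f i - g i| + |f a - g a| * M ^ s.card := by ring
            _ ≤ M ^ (s.card+1) * ∑ i ∈ s, |f i - g i| + |f a - g a| * M ^ (s.card+1) :=
                add_le_add_right (mul_le_mul_of_nonneg_left hpow (abs_nonneg _)) _
            _ = M ^ (s.card + 1) * (|f a - g a| + ∑ i ∈ s, |f i - g i|) := by ring

lemma inv_sqrt_diff_le {p q ε : ℝ} (hε : 0 < ε) (hp : ε ≤ p) (hq : ε ≤ q) :
    |(Real.sqrt p)⁻¹ - (Real.sqrt q)⁻¹| ≤ |p - q| / (2 * ε * Real.sqrt ε) := by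
  have hp0 : 0 < p := lt_of_lt_of_le hε hp
  have hq0 : 0 < q := lt_of_lt_of_le hε hq
  have hsp : 0 < Real.sqrt p := Real.sqrt_pos.2 hp0
  have hsq : 0 < Real.sqrt q := Real.sqrt_pos.2 hq0
  have hse : 0 < Real.sqrt ε := Real.sqrt_pos.2 hε
  have hspe : Real.sqrt ε ≤ Real.sqrt p := Real.sqrt_le_sqrt hp
  have hsqe : Real.sqrt ε ≤ Real.sqrt q := Real.sqrt_le_sqrt hq
  have h1 : (Real.sqrt p)⁻¹ - (Real.sqrt q)⁻¹
      = (Real.sqrt q - Real.sqrt p) / (Real.sqrt p * Real.sqrt q) := by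
    field_simp
  have h2 : |Real.sqrt q - Real.sqrt p| * (Real.sqrt q + Real.sqrt p) = |q - p| := by
    rw [← abs_of_pos (show (0:ℝ) < Real.sqrt q + Real.sqrt p by positivity), ← abs_mul]
    congr 1
    nlinarith [Real.sq_sqrt hp0.le, Real.sq_sqrt hq0.le]
  have h3 : |Real.sqrt q - Real.sqrt p| ≤ |q - p| / (2 * Real.sqrt ε) := by
    rw [le_div_iff₀ (by positivity), ← h2]
    have : 2 * Real.sqrt ε ≤ Real.sqrt q + Real.sqrt p := by linarith
    exact mul_le_mul_of_nonneg_left this (abs_nonneg _)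
  rw [h1, abs_div, abs_of_pos (by positivity : (0:ℝ) < Real.sqrt p * Real.sqrt q)]
  have h4 : ε * (2 * Real.sqrt ε) ≤ (Real.sqrt p * Real.sqrt q) * (2 * Real.sqrt ε) := by
    have : ε ≤ Real.sqrt p * Real.sqrt q := by
      nlinarith [Real.sq_sqrt hε.le]
    nlinarith
  have hεpq : ε ≤ Real.sqrt p * Real.sqrt q := by nlinarith [Real.sq_sqrt hε.le]
  calc |Real.sqrt q - Real.sqrt p| / (Real.sqrt p * Real.sqrt q)
      ≤ (|q - p| / (2 * Real.sqrt ε)) / ε :=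
        div_le_div₀ (by positivity) h3 hε hεpq
    _ = |p - q| / (2 * ε * Real.sqrt ε) := by
        rw [abs_sub_comm q p]
        rw [div_div]
        ring_nf

lemma gen_ineq_aux (b1 b2 i D : ℝ) (hb2 : 0 ≤ b2) (hD : 0 ≤ D) (hi : 1 ≤ i) :
    b1 * i * D + b2 * D ≤ (b1 + b2) * i * D := by
  have h1 : b2 * D * 1 ≤ b2 * D * i := mul_le_mul_of_nonneg_left hi (mul_nonneg hb2 hD)
  nlinarith [h1]

set_option maxHeartbeats 1000000

theorem standardized_kernel_increment_bound
    (d : ℕ) (hd : 1 ≤ d)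
    (m : (Fin d → ℝ) → ℝ) (L : NNReal) (hL : LipschitzWith L m)
    (c₀ C₀ : ℝ) (hc₀ : 0 < c₀) (hm : ∀ x, c₀ ≤ m x ∧ m x ≤ C₀)
    (K : ℝ → ℝ) (LK : NNReal) (hK : LipschitzWith LK K)
    (hKsupp : Function.support K ⊆ Set.Icc (-1 : ℝ) 1)
    (Kd : (Fin d → ℝ) → ℝ) (hKd : Kd = fun u => ∏ j, K (u j))
    (κ : ℝ) (hκ : κ = ∫ u : Fin d → ℝ, (Kd u) ^ 2) (hκpos : 0 < κ)
    (A : (Fin d → ℝ) → ℝ → ℝ)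
    (hA : A = fun x h => ∫ u : Fin d → ℝ, m (x + h • u) * (Kd u) ^ 2)
    (Φ : (Fin d → ℝ) → ℝ → (Fin d → ℝ) → ℝ)
    (hΦ : Φ = fun x h t => (h ^ d * A x h) ^ (-(1 : ℝ) / 2) * Kd (h⁻¹ • (t - x))) :
    (∀ (x : Fin d → ℝ) (h : ℝ), 0 < h → h ≤ 1 →
      (∫ t : Fin d → ℝ, (Φ x h t) ^ 2 * m t) = 1) ∧
    ∃ C' : ℝ, ∀ (x x' : Fin d → ℝ) (h : ℝ), 0 < h → h ≤ 1 →
      (∫ t : Fin d → ℝ, (Φ x h t - Φ x' h t) ^ 2 * m t)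
        ≤ C' * (h ^ 2)⁻¹ * ‖x - x'‖ ^ 2 := by
  -- basic continuity
  have contK : Continuous K := hK.continuous
  have contm : Continuous m := hL.continuous
  have contKd : Continuous Kd := by
    rw [hKd]
    exact continuous_finset_prod _ fun i _ => contK.comp (continuous_apply i)
  have hm0 : ∀ t, 0 < m t := fun t => lt_of_lt_of_le hc₀ (hm t).1
  -- support of Kd
  have suppKd : ∀ u : Fin d → ℝ, Kd u ≠ 0 → ‖u‖ ≤ 1 := by
    intro u hu
    rw [pi_norm_le_iff_of_nonneg zero_le_one]
    intro i
    rw [hKd] at hu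
    have hKi : K (u i) ≠ 0 := by
      intro h0
      exact hu (Finset.prod_eq_zero (Finset.mem_univ i) h0)
    have := hKsupp (Function.mem_support.2 hKi)
    rw [Real.norm_eq_abs, abs_le]
    exact ⟨this.1, this.2⟩
  have hcompKd : HasCompactSupport Kd :=
    HasCompactSupport.intro (isCompact_closedBall (0 : Fin d → ℝ) 1)
      (fun u hu => by
        by_contra h0
        exact hu (Metric.mem_closedBall.2 (by simpa [dist_zero_right] using suppKd u h0)))
  have intKd2 : Integrable (fun u : Fin d → ℝ => Kd u ^ 2) :=
    (contKd.pow 2).integrable_of_hasCompactSupport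
      (hcompKd.comp_left (g := fun y : ℝ => y ^ 2) (by simp) |>.mono
        (by intro t ht; simpa using ht))
  have hKd2nonneg : ∀ u : Fin d → ℝ, (0:ℝ) ≤ Kd u ^ 2 := fun u => sq_nonneg _
  -- integrability of the A-integrand
  have intA : ∀ (x : Fin d → ℝ) (h : ℝ),
      Integrable (fun u : Fin d → ℝ => m (x + h • u) * Kd u ^ 2) := by
    intro x h
    apply Continuous.integrable_of_hasCompactSupport
    · exact (contm.comp (continuous_const.add (continuous_id.const_smul h))).mul
        (contKd.pow 2)
    · apply HasCompactSupport.intro (isCompact_closedBall (0 : Fin d → ℝ) 1)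
      intro u hu
      have : Kd u = 0 := by
        by_contra h0
        exact hu (Metric.mem_closedBall.2 (by simpa [dist_zero_right] using suppKd u h0))
      simp [this]
  -- bounds on A
  have Alb : ∀ (x : Fin d → ℝ) (h : ℝ), c₀ * κ ≤ A x h := by
    intro x h
    rw [hA, hκ]
    simp only
    rw [← integral_const_mul]
    apply integral_mono (intKd2.const_mul c₀) (intA x h)
    intro u
    exact mul_le_mul_of_nonneg_right (hm _).1 (sq_nonneg _)
  have Aub : ∀ (x : Fin d → ℝ) (h : ℝ), A x h ≤ C₀ * κ := by
    intro x h
    rw [hA, hκ]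
    simp only
    rw [← integral_const_mul]
    apply integral_mono (intA x h) (intKd2.const_mul C₀)
    intro u
    exact mul_le_mul_of_nonneg_right (hm _).2 (sq_nonneg _)
  have hAx : ∀ (x : Fin d → ℝ) (h : ℝ), 0 < A x h := fun x h =>
    lt_of_lt_of_le (by positivity) (Alb x h)
  -- the key change-of-variables identity
  have key : ∀ (x : Fin d → ℝ) (h : ℝ), 0 < h →
      (∫ t : Fin d → ℝ, Kd (h⁻¹ • (t - x)) ^ 2 * m t) = h ^ d * A x h := by
    intro x h hh
    have e1 : (∫ t : Fin d → ℝ, Kd (h⁻¹ • (t - x)) ^ 2 * m t)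
        = ∫ s : Fin d → ℝ, Kd (h⁻¹ • s) ^ 2 * m (x + s) := by
      rw [← integral_add_left_eq_self (fun t : Fin d → ℝ => Kd (h⁻¹ • (t - x)) ^ 2 * m t) x]
      simp only [add_sub_cancel_left]
    have e2 : (∫ s : Fin d → ℝ, Kd (h⁻¹ • s) ^ 2 * m (x + s))
        = ∫ s : Fin d → ℝ, (fun u : Fin d → ℝ => Kd u ^ 2 * m (x + h • u)) (h⁻¹ • s) := by
      congr 1
      funext s
      simp only
      rw [smul_smul, mul_inv_cancel₀ hh.ne', one_smul]
    have e3 := Measure.integral_comp_smul (volume : Measure (Fin d → ℝ))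
      (fun u : Fin d → ℝ => Kd u ^ 2 * m (x + h • u)) h⁻¹
    rw [e1, e2, e3]
    rw [Module.finrank_fin_fun]
    rw [inv_pow, inv_inv, abs_of_pos (pow_pos hh d), smul_eq_mul]
    congr 1
    rw [hA]
    simp only
    congr 1
    funext u
    ring
  -- squared normalization constant
  have rpow_sq : ∀ p : ℝ, 0 < p → (p ^ (-(1:ℝ)/2)) ^ 2 = p⁻¹ := by
    intro p hp
    rw [← Real.rpow_natCast (p ^ (-(1:ℝ)/2)) 2, ← Real.rpow_mul hp.le]
    norm_num [Real.rpow_neg_one]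
  have hpd : ∀ (x : Fin d → ℝ) (h : ℝ), 0 < h → 0 < h ^ d * A x h := fun x h hh =>
    mul_pos (pow_pos hh d) (hAx x h)
  have norm1 : ∀ (x : Fin d → ℝ) (h : ℝ), 0 < h → h ≤ 1 →
      (∫ t : Fin d → ℝ, (Φ x h t) ^ 2 * m t) = 1 := by
    intro x h hh _
    rw [hΦ]
    simp only [mul_pow]
    simp_rw [mul_assoc]
    rw [integral_const_mul, rpow_sq _ (hpd x h hh), key x h hh]
    exact inv_mul_cancel₀ (hpd x h hh).ne'
  refine ⟨norm1, ?_⟩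
  -- bound on K
  set MK : ℝ := 3 * (LK : ℝ) + 1 with hMK
  have hMK1 : (1:ℝ) ≤ MK := by rw [hMK]; nlinarith [NNReal.coe_nonneg LK]
  have hKb : ∀ t : ℝ, |K t| ≤ MK := by
    intro t
    by_cases ht : t ∈ Set.Icc (-1:ℝ) 1
    · have hK2 : K 2 = 0 := by
        by_contra h0
        have := hKsupp (Function.mem_support.2 h0)
        rw [Set.mem_Icc] at this
        linarith [this.2]
      have hd2 := hK.dist_le_mul t 2
      rw [Real.dist_eq, Real.dist_eq, hK2, sub_zero] at hd2
      rw [Set.mem_Icc] at ht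
      have h3 : |t - 2| ≤ 3 := by rw [abs_le]; constructor <;> linarith [ht.1, ht.2]
      have := hd2.trans (mul_le_mul_of_nonneg_left h3 (NNReal.coe_nonneg LK))
      rw [hMK]; linarith
    · have : K t = 0 := by
        by_contra h0; exact ht (hKsupp (Function.mem_support.2 h0))
      rw [this, abs_zero]; positivity
  -- Lipschitz-type bound for Kd
  set CK : ℝ := MK ^ d * d * (LK : ℝ) with hCK
  have hCK0 : (0:ℝ) ≤ CK := by positivity
  have KdLip : ∀ u v : Fin d → ℝ, |Kd u - Kd v| ≤ CK * ‖u - v‖ := by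
    intro u v
    rw [hKd]
    have hb := prod_diff_bound' (fun j => K (u j)) (fun j => K (v j)) MK hMK1
      (fun i => hKb _) (fun i => hKb _) Finset.univ
    rw [Finset.card_univ, Fintype.card_fin] at hb
    refine hb.trans ?_
    have hsum : ∑ i : Fin d, |K (u i) - K (v i)| ≤ ∑ _i : Fin d, (LK : ℝ) * ‖u - v‖ := by
      apply Finset.sum_le_sum
      intro i _
      have h1 := hK.dist_le_mul (u i) (v i)
      rw [Real.dist_eq, Real.dist_eq] at h1
      refine h1.trans ?_
      have h2 : |u i - v i| ≤ ‖u - v‖ := by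
        have := norm_le_pi_norm (u - v) i
        simpa [Real.norm_eq_abs] using this
      exact mul_le_mul_of_nonneg_left h2 (NNReal.coe_nonneg LK)
    calc MK ^ d * ∑ i : Fin d, |K (u i) - K (v i)|
        ≤ MK ^ d * ∑ _i : Fin d, (LK:ℝ) * ‖u - v‖ :=
          mul_le_mul_of_nonneg_left hsum (by positivity)
      _ = CK * ‖u - v‖ := by
          rw [Finset.sum_const, Finset.card_univ, Fintype.card_fin, nsmul_eq_mul, hCK]
          ring
  -- Lipschitz bound for A
  have ALip : ∀ (x x' : Fin d → ℝ) (h : ℝ), |A x h - A x' h| ≤ (L:ℝ) * κ * ‖x - x'‖ := by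
    intro x x' h
    have efun : (fun u : Fin d → ℝ => (m (x + h • u) - m (x' + h • u)) * Kd u ^ 2)
        = fun u => m (x + h • u) * Kd u ^ 2 - m (x' + h • u) * Kd u ^ 2 := by
      funext u; ring
    have intdiff : Integrable
        (fun u : Fin d → ℝ => (m (x + h • u) - m (x' + h • u)) * Kd u ^ 2) := by
      rw [efun]; exact (intA x h).sub (intA x' h)
    calc |A x h - A x' h|
        = |∫ u : Fin d → ℝ, (m (x + h • u) - m (x' + h • u)) * Kd u ^ 2| := by
          rw [hA]; simp only
          rw [← integral_sub (intA x h) (intA x' h), ← efun]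
      _ ≤ ∫ u : Fin d → ℝ, ‖(m (x + h • u) - m (x' + h • u)) * Kd u ^ 2‖ := by
          rw [← Real.norm_eq_abs]
          exact norm_integral_le_integral_norm _
      _ ≤ ∫ u : Fin d → ℝ, ((L:ℝ) * ‖x - x'‖) * Kd u ^ 2 := by
          apply integral_mono intdiff.norm (intKd2.const_mul _)
          intro u
          simp only [norm_mul, Real.norm_eq_abs]
          rw [abs_of_nonneg (sq_nonneg (Kd u))]
          apply mul_le_mul_of_nonneg_right _ (sq_nonneg _)
          have h1 := hL.dist_le_mul (x + h • u) (x' + h • u)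
          rw [dist_eq_norm, dist_eq_norm] at h1
          have h2 : x + h • u - (x' + h • u) = x - x' := by abel
          rw [h2] at h1
          exact h1
      _ = (L:ℝ) * κ * ‖x - x'‖ := by rw [integral_const_mul, ← hκ]; ring
  refine ⟨2 * (2 ^ (d+1) * C₀ * CK ^ 2 / (c₀ * κ)) + 2 * ((L:ℝ)^2 * C₀ / (4 * c₀ ^ 3)), ?_⟩
  intro x x' h hh hh1
  have hs : (0:ℝ) < h ^ d := pow_pos hh d
  set p := h ^ d * A x h with hpdef
  set q := h ^ d * A x' h with hqdef
  have hp : 0 < p := hpd x h hh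
  have hq : 0 < q := hpd x' h hh
  set ε : ℝ := h ^ d * (c₀ * κ) with hεdef
  have hε : 0 < ε := by rw [hεdef]; positivity
  have hεp : ε ≤ p := by rw [hεdef, hpdef]; exact mul_le_mul_of_nonneg_left (Alb x h) hs.le
  have hεq : ε ≤ q := by rw [hεdef, hqdef]; exact mul_le_mul_of_nonneg_left (Alb x' h) hs.le
  set a := p ^ (-(1:ℝ)/2) with hadef
  set a' := q ^ (-(1:ℝ)/2) with ha'def
  set G : (Fin d → ℝ) → ℝ := fun t => Kd (h⁻¹ • (t - x)) with hGdef
  set G' : (Fin d → ℝ) → ℝ := fun t => Kd (h⁻¹ • (t - x')) with hG'def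
  have contG : Continuous G := by
    rw [hGdef]
    exact contKd.comp ((continuous_id.sub continuous_const).const_smul h⁻¹)
  have contG' : Continuous G' := by
    rw [hG'def]
    exact contKd.comp ((continuous_id.sub continuous_const).const_smul h⁻¹)
  set S : Set (Fin d → ℝ) := Metric.closedBall x h ∪ Metric.closedBall x' h with hSdef
  have hScomp : IsCompact S := (isCompact_closedBall x h).union (isCompact_closedBall x' h)
  have hball : ∀ (y : Fin d → ℝ) (t : Fin d → ℝ), Kd (h⁻¹ • (t - y)) ≠ 0 →
      t ∈ Metric.closedBall y h := by
    intro y t h0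
    have h1 : ‖h⁻¹ • (t - y)‖ ≤ 1 := suppKd _ h0
    rw [norm_smul, Real.norm_eq_abs, abs_of_pos (inv_pos.2 hh)] at h1
    rw [Metric.mem_closedBall, dist_eq_norm]
    calc ‖t - y‖ = h * (h⁻¹ * ‖t - y‖) := by field_simp
      _ ≤ h * 1 := mul_le_mul_of_nonneg_left h1 hh.le
      _ = h := mul_one h
  have hGS : ∀ t ∉ S, G t = 0 := by
    intro t ht
    by_contra h0
    exact ht (Set.mem_union_left _ (hball x t h0))
  have hG'S : ∀ t ∉ S, G' t = 0 := by
    intro t ht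
    by_contra h0
    exact ht (Set.mem_union_right _ (hball x' t h0))
  have hGG' : ∀ t, |G t - G' t| ≤ CK * (h⁻¹ * ‖x - x'‖) := by
    intro t
    refine (KdLip _ _).trans ?_
    have e : h⁻¹ • (t - x) - h⁻¹ • (t - x') = h⁻¹ • (x' - x) := by
      rw [← smul_sub]; congr 1; abel
    rw [e, norm_smul, Real.norm_eq_abs, abs_of_pos (inv_pos.2 hh), norm_sub_rev]
  have mk_int : ∀ f : (Fin d → ℝ) → ℝ, Continuous f → (∀ t ∉ S, f t = 0) → Integrable f :=
    fun f hf h0 => hf.integrable_of_hasCompactSupport (HasCompactSupport.intro hScomp h0)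
  have int1 : Integrable (fun t => (a * (G t - G' t))^2 * m t) :=
    mk_int _ (((continuous_const.mul (contG.sub contG')).pow 2).mul contm)
      (fun t ht => by rw [hGS t ht, hG'S t ht]; simp)
  have int2 : Integrable (fun t => ((a - a') * G' t)^2 * m t) :=
    mk_int _ (((continuous_const.mul contG').pow 2).mul contm)
      (fun t ht => by rw [hG'S t ht]; simp)
  have intL : Integrable (fun t => (a * G t - a' * G' t)^2 * m t) :=
    mk_int _ ((((continuous_const.mul contG).sub (continuous_const.mul contG')).pow 2).mul contm)
      (fun t ht => by rw [hGS t ht, hG'S t ht]; simp)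
  have stepB : (∫ t : Fin d → ℝ, (a * G t - a' * G' t)^2 * m t)
      ≤ 2 * (∫ t : Fin d → ℝ, (a * (G t - G' t))^2 * m t)
        + 2 * (∫ t : Fin d → ℝ, ((a - a') * G' t)^2 * m t) := by
    rw [← integral_const_mul, ← integral_const_mul,
      ← integral_add (int1.const_mul 2) (int2.const_mul 2)]
    apply integral_mono intL ((int1.const_mul 2).add (int2.const_mul 2))
    intro t
    simp only [Pi.add_apply]
    nlinarith [mul_nonneg (sq_nonneg (a * (G t - G' t) - (a - a') * G' t)) (hm0 t).le]
  -- term 2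
  have eT2 : (∫ t : Fin d → ℝ, ((a - a') * G' t)^2 * m t) = (a - a')^2 * q := by
    simp_rw [mul_pow, mul_assoc]
    rw [integral_const_mul]
    congr 1
    simp only [hG'def]
    rw [key x' h hh]
  have hκne : κ ≠ 0 := hκpos.ne'
  have hc₀ne : c₀ ≠ 0 := hc₀.ne'
  have hhne : h ≠ 0 := hh.ne'
  have ha_inv : a = (Real.sqrt p)⁻¹ := by
    rw [hadef, show (-(1:ℝ)/2) = -(1/2 : ℝ) by norm_num, Real.rpow_neg hp.le,
      ← Real.sqrt_eq_rpow]
  have ha'_inv : a' = (Real.sqrt q)⁻¹ := by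
    rw [ha'def, show (-(1:ℝ)/2) = -(1/2 : ℝ) by norm_num, Real.rpow_neg hq.le,
      ← Real.sqrt_eq_rpow]
  have haa' : |a - a'| ≤ (h ^ d * ((L:ℝ) * κ * ‖x - x'‖)) / (2 * ε * Real.sqrt ε) := by
    rw [ha_inv, ha'_inv]
    refine (inv_sqrt_diff_le hε hεp hεq).trans ?_
    have hnum : |p - q| ≤ h ^ d * ((L:ℝ) * κ * ‖x - x'‖) := by
      have e : |p - q| = h ^ d * |A x h - A x' h| := by
        rw [hpdef, hqdef, ← mul_sub, abs_mul, abs_of_pos hs]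
      rw [e]
      exact mul_le_mul_of_nonneg_left (ALip x x' h) hs.le
    gcongr
  have hT2 : (a - a')^2 * q ≤ (L:ℝ)^2 * C₀ / (4 * c₀^3) * ‖x - x'‖^2 := by
    have h1 : (a - a')^2 ≤ ((h ^ d * ((L:ℝ) * κ * ‖x - x'‖)) / (2 * ε * Real.sqrt ε))^2 := by
      rw [← sq_abs (a - a')]
      exact pow_le_pow_left₀ (abs_nonneg _) haa' 2
    have h2 : q ≤ h ^ d * (C₀ * κ) := by
      rw [hqdef]; exact mul_le_mul_of_nonneg_left (Aub x' h) hs.le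
    have h3 : (a - a')^2 * q
        ≤ ((h ^ d * ((L:ℝ) * κ * ‖x - x'‖)) / (2 * ε * Real.sqrt ε))^2 * (h ^ d * (C₀ * κ)) :=
      mul_le_mul h1 h2 hq.le (by positivity)
    refine h3.trans_eq ?_
    have key2 : (2 * ε * Real.sqrt ε)^2 = 4 * ε^3 := by
      have : Real.sqrt ε ^ 2 = ε := Real.sq_sqrt hε.le
      nlinarith [this]
    rw [div_pow, key2, hεdef]
    have hhd : (h:ℝ) ^ d ≠ 0 := hs.ne'
    field_simp
  -- term 1
  have hSmeasR : (volume S).toReal ≤ 2 * (2*h)^d := by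
    have e1 : volume (Metric.closedBall x h) = ENNReal.ofReal ((2*h)^d) := by
      rw [Real.volume_pi_closedBall x hh.le, Fintype.card_fin]
    have e2 : volume (Metric.closedBall x' h) = ENNReal.ofReal ((2*h)^d) := by
      rw [Real.volume_pi_closedBall x' hh.le, Fintype.card_fin]
    have hSm : volume S ≤ ENNReal.ofReal (2 * (2*h)^d) := by
      refine (measure_union_le _ _).trans ?_
      rw [e1, e2, ← ENNReal.ofReal_add (by positivity) (by positivity)]
      exact ENNReal.ofReal_le_ofReal (le_of_eq (by ring))
    calc (volume S).toReal ≤ (ENNReal.ofReal (2 * (2*h)^d)).toReal :=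
          ENNReal.toReal_mono ENNReal.ofReal_ne_top hSm
      _ = 2 * (2*h)^d := ENNReal.toReal_ofReal (by positivity)
  have I_bound : (∫ t : Fin d → ℝ, (G t - G' t)^2 * m t)
      ≤ (CK * (h⁻¹ * ‖x - x'‖))^2 * C₀ * (2 * (2*h)^d) := by
    have hB0 : (0:ℝ) ≤ (CK * (h⁻¹ * ‖x - x'‖))^2 * C₀ := by
      have : (0:ℝ) ≤ C₀ := le_trans hc₀.le (le_trans (hm x).1 (hm x).2)
      positivity
    have hzero : ∀ t ∉ S, (G t - G' t)^2 * m t = 0 := fun t ht => by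
      rw [hGS t ht, hG'S t ht]; simp
    rw [← setIntegral_eq_integral_of_forall_compl_eq_zero hzero]
    have hSfin : volume S < ⊤ := hScomp.measure_lt_top
    have hbound : ∀ t ∈ S, ‖(G t - G' t)^2 * m t‖ ≤ (CK * (h⁻¹ * ‖x - x'‖))^2 * C₀ := by
      intro t _
      rw [Real.norm_eq_abs, abs_mul, abs_of_pos (hm0 t), abs_of_nonneg (sq_nonneg _)]
      have h1 : (G t - G' t)^2 ≤ (CK * (h⁻¹ * ‖x - x'‖))^2 := by
        rw [← sq_abs (G t - G' t)]
        exact pow_le_pow_left₀ (abs_nonneg _) (hGG' t) 2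
      exact mul_le_mul h1 (hm t).2 (hm0 t).le (by positivity)
    have hnorm := norm_setIntegral_le_of_norm_le_const hSfin hbound
    calc (∫ t in S, (G t - G' t)^2 * m t) ≤ ‖∫ t in S, (G t - G' t)^2 * m t‖ :=
          le_abs_self _
      _ ≤ (CK * (h⁻¹ * ‖x - x'‖))^2 * C₀ * (volume S).toReal := hnorm
      _ ≤ (CK * (h⁻¹ * ‖x - x'‖))^2 * C₀ * (2 * (2*h)^d) :=
          mul_le_mul_of_nonneg_left hSmeasR hB0
  have eT1 : (∫ t : Fin d → ℝ, (a * (G t - G' t))^2 * m t)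
      = a^2 * ∫ t : Fin d → ℝ, (G t - G' t)^2 * m t := by
    simp_rw [mul_pow, mul_assoc]
    rw [integral_const_mul]
  have ha2 : a^2 = p⁻¹ := rpow_sq p hp
  have hT1 : (∫ t : Fin d → ℝ, (a * (G t - G' t))^2 * m t)
      ≤ (2 ^ (d+1) * C₀ * CK ^ 2 / (c₀ * κ)) * (h^2)⁻¹ * ‖x - x'‖^2 := by
    rw [eT1, ha2]
    have hpinv : p⁻¹ ≤ ε⁻¹ := inv_anti₀ hε hεp
    have hI0 : (0:ℝ) ≤ ∫ t : Fin d → ℝ, (G t - G' t)^2 * m t :=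
      integral_nonneg (fun t => mul_nonneg (sq_nonneg _) (hm0 t).le)
    calc p⁻¹ * ∫ t : Fin d → ℝ, (G t - G' t)^2 * m t
        ≤ ε⁻¹ * ((CK * (h⁻¹ * ‖x - x'‖))^2 * C₀ * (2 * (2*h)^d)) :=
          mul_le_mul hpinv I_bound hI0 (inv_nonneg.2 hε.le)
      _ = (2 ^ (d+1) * C₀ * CK ^ 2 / (c₀ * κ)) * (h^2)⁻¹ * ‖x - x'‖^2 := by
          rw [hεdef, mul_pow (2:ℝ) h d]
          have hhd : (h:ℝ) ^ d ≠ 0 := hs.ne'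
          field_simp
          ring
  -- assembly
  have hgoal_eq : (fun t : Fin d → ℝ => (Φ x h t - Φ x' h t)^2 * m t)
      = fun t => (a * G t - a' * G' t)^2 * m t := by
    funext t
    simp only [hΦ, hadef, ha'def, hpdef, hqdef, hGdef, hG'def]
  rw [hgoal_eq]
  refine stepB.trans ?_
  have hT2' : (∫ t : Fin d → ℝ, ((a - a') * G' t)^2 * m t)
      ≤ (L:ℝ)^2 * C₀ / (4 * c₀^3) * ‖x - x'‖^2 := by rw [eT2]; exact hT2
  have hC₀0 : (0:ℝ) ≤ C₀ := le_trans hc₀.le (le_trans (hm x).1 (hm x).2)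
  have hinv1 : (1:ℝ) ≤ (h^2)⁻¹ := by
    have hh2 : h^2 ≤ 1 := pow_le_one₀ hh.le hh1
    have := inv_anti₀ (by positivity : (0:ℝ) < h^2) hh2
    simpa using this
  have hB2 : (0:ℝ) ≤ 2 * ((L:ℝ)^2 * C₀ / (4 * c₀^3)) := by positivity
  calc 2 * (∫ t : Fin d → ℝ, (a * (G t - G' t))^2 * m t)
        + 2 * (∫ t : Fin d → ℝ, ((a - a') * G' t)^2 * m t)
      ≤ 2 * ((2 ^ (d+1) * C₀ * CK ^ 2 / (c₀ * κ)) * (h^2)⁻¹ * ‖x - x'‖^2)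
        + 2 * ((L:ℝ)^2 * C₀ / (4 * c₀^3) * ‖x - x'‖^2) := by
        exact add_le_add (mul_le_mul_of_nonneg_left hT1 (by norm_num))
          (mul_le_mul_of_nonneg_left hT2' (by norm_num))
    _ = (2 * (2 ^ (d+1) * C₀ * CK ^ 2 / (c₀ * κ))) * (h^2)⁻¹ * ‖x - x'‖^2
        + (2 * ((L:ℝ)^2 * C₀ / (4 * c₀ ^ 3))) * ‖x - x'‖^2 := by ring
    _ ≤ (2 * (2 ^ (d+1) * C₀ * CK ^ 2 / (c₀ * κ)) + 2 * ((L:ℝ)^2 * C₀ / (4 * c₀ ^ 3)))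
        * (h^2)⁻¹ * ‖x - x'‖^2 :=
        gen_ineq_aux _ _ _ _ hB2 (sq_nonneg _) hinv1
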